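/- Gallagher's larger sieve bound: Let α > 0 and suppose S ⊆ {0,...,N} occupies at most α·p residue classes modulo p for every prime p. Then |S| ≪_α N^α, i.e., there is a constant C(α) with |S| ≤ C(α)·N^α. -/

import Mathlib

open Finset Nat

namespace GallagherAux

/-- Chebyshev bound: `θ(n) ≤ n log 4`. -/
lemma theta_le (n : ℕ) :
    ∑ p ∈ Nat.primesBelow (n + 1), Real.log p ≤ (n : ℝ) * Real.log 4 := by
  have hP : primorial n = ∏ p ∈ Nat.primesBelow (n + 1), p := rfl
  have hpos : 0 < (primorial n : ℝ) := by
    rw [hP]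
    push_cast
    exact Finset.prod_pos fun p hp => by
      exact_mod_cast (Nat.prime_of_mem_primesBelow hp).pos
  have h1 : ∑ p ∈ Nat.primesBelow (n + 1), Real.log p
      = Real.log ((primorial n : ℕ) : ℝ) := by
    rw [hP, Nat.cast_prod, Real.log_prod]
    intro p hp
    have := (Nat.prime_of_mem_primesBelow hp).pos
    positivity
  rw [h1]
  calc Real.log ((primorial n : ℕ) : ℝ) ≤ Real.log ((4 : ℝ) ^ n) := by
        apply Real.log_le_log hpos
        exact_mod_cast primorial_le_4_pow n
    _ = (n : ℝ) * Real.log 4 := by rw [Real.log_pow]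

/-- Telescoping bound: `∑_{m=2}^n log m / ((m-1)m) ≤ 2 - (log n + 2)/n`. -/
lemma tele (n : ℕ) (hn : 1 ≤ n) :
    ∑ m ∈ Finset.Icc 2 n, Real.log m / (((m : ℝ) - 1) * m)
      ≤ 2 - (Real.log n + 2) / n := by
  induction n, hn using Nat.le_induction with
  | base => simp
  | succ n hn ih =>
    have hIcc : Finset.Icc 2 (n + 1) = insert (n + 1) (Finset.Icc 2 n) := by
      ext m; simp only [Finset.mem_Icc, Finset.mem_insert]; omega
    have hnot : (n + 1) ∉ Finset.Icc 2 n := by simp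
    rw [hIcc, Finset.sum_insert hnot]
    have hx : (1 : ℝ) ≤ (n : ℝ) := by exact_mod_cast hn
    have hx0 : (0 : ℝ) < (n : ℝ) := lt_of_lt_of_le one_pos hx
    have hx1 : (0 : ℝ) < (n : ℝ) + 1 := by linarith
    -- key step: log(n+1) - log n ≤ 1/n
    have hlog : Real.log ((n : ℝ) + 1) - Real.log n ≤ 1 / n := by
      have hesc : Real.log (((n : ℝ) + 1) / n) ≤ ((n : ℝ) + 1) / n - 1 :=
        Real.log_le_sub_one_of_pos (by positivity)
      rw [Real.log_div (by positivity) (by positivity)] at hesc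
      have : ((n : ℝ) + 1) / n - 1 = 1 / n := by field_simp; ring
      linarith [this ▸ hesc]
    have hcast : ((n + 1 : ℕ) : ℝ) = (n : ℝ) + 1 := by push_cast; ring
    rw [hcast]
    have h1n : 1 / (n : ℝ) ≤ 1 := by rw [div_le_one hx0]; exact hx
    have hmain : ((n : ℝ) + 1) * (Real.log ((n : ℝ) + 1) - Real.log n) ≤ 2 := by
      have hd : (n : ℝ) * (Real.log ((n : ℝ) + 1) - Real.log n) ≤ 1 := by
        calc (n : ℝ) * (Real.log ((n : ℝ) + 1) - Real.log n) ≤ (n : ℝ) * (1 / n) :=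
              mul_le_mul_of_nonneg_left hlog hx0.le
          _ = 1 := by field_simp
      nlinarith [hlog]
    have hkey : Real.log ((n : ℝ) + 1) / (((n : ℝ) + 1 - 1) * ((n : ℝ) + 1))
        ≤ (Real.log n + 2) / n - (Real.log ((n : ℝ) + 1) + 2) / ((n : ℝ) + 1) := by
      have e1 : ((n : ℝ) + 1 - 1) * ((n : ℝ) + 1) = n * ((n : ℝ) + 1) := by ring
      rw [e1, div_sub_div _ _ hx0.ne' hx1.ne', div_le_div_iff₀ (by positivity) (by positivity)]
      nlinarith [mul_nonneg (mul_pos hx0 hx1).le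
        (show (0 : ℝ) ≤ 2 - ((n : ℝ) + 1) * (Real.log ((n : ℝ) + 1) - Real.log n) by linarith)]
    linarith [ih]

/-- Mertens' first theorem (weak explicit form): `log n - 3 ≤ ∑_{p ≤ n} log p / p`. -/
lemma mertens (n : ℕ) (hn : 1 ≤ n) :
    Real.log n - 3 ≤ ∑ p ∈ Nat.primesBelow (n + 1), Real.log p / p := by
  have hn0 : (0 : ℝ) < n := by exact_mod_cast hn
  have hfac : (0 : ℝ) < ((n ! : ℕ) : ℝ) := by exact_mod_cast n.factorial_pos
  -- (a) lower bound for log n!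
  have hlow : (n : ℝ) * Real.log n - n ≤ Real.log ((n ! : ℕ) : ℝ) := by
    have h1 : (n : ℝ) ^ n / ((n ! : ℕ) : ℝ) ≤ Real.exp n := by
      calc (n : ℝ) ^ n / ((n ! : ℕ) : ℝ)
          ≤ ∑ i ∈ Finset.range (n + 1), (n : ℝ) ^ i / (i ! : ℕ) := by
            refine Finset.single_le_sum (f := fun i => (n : ℝ) ^ i / ((i ! : ℕ) : ℝ))
              (fun i _ => by positivity) (Finset.self_mem_range_succ n)
        _ ≤ Real.exp n := Real.sum_le_exp_of_nonneg hn0.le _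
    have h2 : Real.log ((n : ℝ) ^ n / ((n ! : ℕ) : ℝ)) ≤ (n : ℝ) := by
      calc Real.log ((n : ℝ) ^ n / ((n ! : ℕ) : ℝ)) ≤ Real.log (Real.exp n) :=
            Real.log_le_log (by positivity) h1
        _ = n := Real.log_exp _
    rw [Real.log_div (by positivity) hfac.ne', Real.log_pow] at h2
    linarith
  -- (b) factorization identity
  have hPF : Nat.primesBelow (n + 1) = (n !).primeFactors := by
    ext p
    simp only [Nat.mem_primesBelow, Nat.mem_primeFactors]
    constructor
    · rintro ⟨hlt, hp⟩
      exact ⟨hp, (Nat.Prime.dvd_factorial hp).mpr (by omega), n.factorial_ne_zero⟩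
    · rintro ⟨hp, hdvd, -⟩
      have := (Nat.Prime.dvd_factorial hp).mp hdvd
      exact ⟨by omega, hp⟩
  have hid : Real.log ((n ! : ℕ) : ℝ)
      = ∑ p ∈ Nat.primesBelow (n + 1), ((n !).factorization p : ℝ) * Real.log p := by
    rw [hPF]
    conv_lhs => rw [← Nat.factorization_prod_pow_eq_self n.factorial_ne_zero]
    rw [Finsupp.prod, Nat.support_factorization, Nat.cast_prod, Real.log_prod
      (fun p hp => by
        have := (Nat.prime_of_mem_primeFactors hp).pos
        positivity)]
    refine Finset.sum_congr rfl fun p hp => ?_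
    rw [Nat.cast_pow, Real.log_pow]
  -- (c) per-prime Legendre bound
  have hbound : ∀ p ∈ Nat.primesBelow (n + 1),
      ((n !).factorization p : ℝ) * Real.log p
        ≤ (n : ℝ) * (Real.log p / p) + (n : ℝ) * (Real.log p / (((p : ℝ) - 1) * p)) := by
    intro p hp
    have hpp := Nat.prime_of_mem_primesBelow hp
    haveI : Fact p.Prime := ⟨hpp⟩
    have hp1 : (1 : ℝ) < (p : ℝ) := by exact_mod_cast hpp.one_lt
    have hp0 : (0 : ℝ) < (p : ℝ) := lt_trans one_pos hp1
    have hleg : (n !).factorization p = ∑ i ∈ Finset.Ico 1 (n + 1), n / p ^ i := by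
      rw [Nat.factorization_def _ hpp]
      exact padicValNat_factorial (Nat.lt_succ_of_le (Nat.log_le_self p n))
    have hr0 : (0 : ℝ) ≤ 1 / (p : ℝ) := by positivity
    have hr1 : 1 / (p : ℝ) < 1 := by rw [div_lt_one hp0]; exact hp1
    have hg : ∑ i ∈ Finset.Ico 1 (n + 1), (1 / (p : ℝ)) ^ i ≤ 1 / ((p : ℝ) - 1) := by
      rw [Finset.sum_Ico_eq_sum_range]
      have hgeo : ∑ i ∈ Finset.range (n + 1 - 1), (1 / (p : ℝ)) ^ i
          ≤ (1 - 1 / (p : ℝ))⁻¹ := by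
        have hsummable := summable_geometric_of_lt_one hr0 hr1
        have := Summable.sum_le_tsum (Finset.range (n + 1 - 1))
          (fun i _ => pow_nonneg hr0 i) hsummable
        rwa [tsum_geometric_of_lt_one hr0 hr1] at this
      calc ∑ i ∈ Finset.range (n + 1 - 1), (1 / (p : ℝ)) ^ (1 + i)
          = (1 / (p : ℝ)) * ∑ i ∈ Finset.range (n + 1 - 1), (1 / (p : ℝ)) ^ i := by
            rw [Finset.mul_sum]
            exact Finset.sum_congr rfl fun i _ => by rw [pow_add, pow_one]
        _ ≤ (1 / (p : ℝ)) * (1 - 1 / (p : ℝ))⁻¹ := by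
            exact mul_le_mul_of_nonneg_left hgeo hr0
        _ = 1 / ((p : ℝ) - 1) := by
            have hps : (p : ℝ) - 1 ≠ 0 := by linarith
            have hpne : (p : ℝ) ≠ 0 := hp0.ne'
            field_simp
    have hsum : (((n !).factorization p : ℕ) : ℝ) ≤ (n : ℝ) / ((p : ℝ) - 1) := by
      rw [hleg]
      push_cast
      calc ∑ i ∈ Finset.Ico 1 (n + 1), ((n / p ^ i : ℕ) : ℝ)
          ≤ ∑ i ∈ Finset.Ico 1 (n + 1), (n : ℝ) * (1 / (p : ℝ)) ^ i := by
            refine Finset.sum_le_sum fun i _ => ?_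
            calc ((n / p ^ i : ℕ) : ℝ) ≤ (n : ℝ) / ((p : ℕ) ^ i : ℕ) := Nat.cast_div_le
              _ = (n : ℝ) * (1 / (p : ℝ)) ^ i := by
                  push_cast
                  rw [div_pow, one_pow, mul_one_div]
        _ = (n : ℝ) * ∑ i ∈ Finset.Ico 1 (n + 1), (1 / (p : ℝ)) ^ i := by
            rw [Finset.mul_sum]
        _ ≤ (n : ℝ) * (1 / ((p : ℝ) - 1)) := mul_le_mul_of_nonneg_left hg hn0.le
        _ = (n : ℝ) / ((p : ℝ) - 1) := by rw [mul_one_div]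
    have hlogp : 0 ≤ Real.log p := Real.log_nonneg hp1.le
    calc ((n !).factorization p : ℝ) * Real.log p
        ≤ ((n : ℝ) / ((p : ℝ) - 1)) * Real.log p := mul_le_mul_of_nonneg_right hsum hlogp
      _ = (n : ℝ) * (Real.log p / p) + (n : ℝ) * (Real.log p / (((p : ℝ) - 1) * p)) := by
          have hps : (p : ℝ) - 1 ≠ 0 := by linarith
          have hpne : (p : ℝ) ≠ 0 := hp0.ne'
          field_simp
          ring
  -- (d) tail bound via telescoping
  have htail : ∑ p ∈ Nat.primesBelow (n + 1), Real.log p / (((p : ℝ) - 1) * p) ≤ 2 := by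
    calc ∑ p ∈ Nat.primesBelow (n + 1), Real.log p / (((p : ℝ) - 1) * p)
        ≤ ∑ m ∈ Finset.Icc 2 n, Real.log m / (((m : ℝ) - 1) * m) := by
          refine Finset.sum_le_sum_of_subset_of_nonneg ?_ ?_
          · intro p hp
            rw [Nat.mem_primesBelow] at hp
            rw [Finset.mem_Icc]
            exact ⟨hp.2.two_le, by omega⟩
          · intro m hm _
            rw [Finset.mem_Icc] at hm
            have h2m : (2 : ℝ) ≤ (m : ℝ) := by exact_mod_cast hm.1
            apply div_nonneg (Real.log_nonneg (by linarith))
            nlinarith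
      _ ≤ 2 - (Real.log n + 2) / n := tele n hn
      _ ≤ 2 := by
          have h0 : 0 ≤ (Real.log n + 2) / n := by
            apply div_nonneg _ hn0.le
            have := Real.log_nonneg (by exact_mod_cast hn : (1 : ℝ) ≤ (n : ℝ))
            linarith
          linarith
  -- (e) combine
  have hup : Real.log ((n ! : ℕ) : ℝ)
      ≤ (n : ℝ) * (∑ p ∈ Nat.primesBelow (n + 1), Real.log p / p) + (n : ℝ) * 2 := by
    rw [hid]
    calc ∑ p ∈ Nat.primesBelow (n + 1), ((n !).factorization p : ℝ) * Real.log p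
        ≤ ∑ p ∈ Nat.primesBelow (n + 1),
            ((n : ℝ) * (Real.log p / p) + (n : ℝ) * (Real.log p / (((p : ℝ) - 1) * p))) :=
          Finset.sum_le_sum hbound
      _ = (n : ℝ) * (∑ p ∈ Nat.primesBelow (n + 1), Real.log p / p)
          + (n : ℝ) * (∑ p ∈ Nat.primesBelow (n + 1), Real.log p / (((p : ℝ) - 1) * p)) := by
          rw [Finset.sum_add_distrib, Finset.mul_sum, Finset.mul_sum]
      _ ≤ (n : ℝ) * (∑ p ∈ Nat.primesBelow (n + 1), Real.log p / p) + (n : ℝ) * 2 := by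
          have := mul_le_mul_of_nonneg_left htail hn0.le
          linarith
  have h2 : (n : ℝ) * (Real.log n - 3)
      ≤ (n : ℝ) * (∑ p ∈ Nat.primesBelow (n + 1), Real.log p / p) := by nlinarith
  exact (mul_le_mul_iff_right₀ hn0).mp h2

/-- Cauchy–Schwarz pair-counting bound for one prime. -/
lemma pair_bound (α : ℝ) (S : Finset ℕ) (p : ℕ)
    (hres : ((S.image (fun s : ℕ => (s : ZMod p))).card : ℝ) ≤ α * p)
    (hαp : 0 ≤ α * (p : ℝ)) :
    ((S.card : ℝ)) ^ 2 ≤ α * p * ((S.card : ℝ) +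
      (((((S ×ˢ S).filter (fun st => st.1 ≠ st.2)).filter
        (fun st => (st.1 : ZMod p) = (st.2 : ZMod p))).card : ℝ))) := by
  classical
  set I := S.image (fun s : ℕ => (s : ZMod p)) with hI
  set P := (S ×ˢ S).filter (fun st => (st.1 : ZMod p) = (st.2 : ZMod p)) with hP
  have hcard : S.card = ∑ c ∈ I, (S.filter (fun s : ℕ => (↑s : ZMod p) = c)).card :=
    Finset.card_eq_sum_card_fiberwise (f := fun s : ℕ => (s : ZMod p)) (s := S) (t := I)
      (fun s hs => Finset.mem_image_of_mem _ hs)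
  have hPcard : P.card = ∑ c ∈ I, ((S.filter (fun s : ℕ => (↑s : ZMod p) = c)).card) ^ 2 := by
    have hmem : ∀ st ∈ P, (st.1 : ZMod p) ∈ I := fun st hst =>
      Finset.mem_image_of_mem _ (Finset.mem_product.mp (Finset.mem_filter.mp hst).1).1
    rw [Finset.card_eq_sum_card_fiberwise (f := fun st : ℕ × ℕ => (st.1 : ZMod p))
      (s := P) (t := I) hmem]
    refine Finset.sum_congr rfl fun c hc => ?_
    have hfib : P.filter (fun st => (st.1 : ZMod p) = c)
        = (S.filter (fun s : ℕ => (↑s : ZMod p) = c)) ×ˢ (S.filter (fun s : ℕ => (↑s : ZMod p) = c)) := by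
      ext st
      simp only [hP, Finset.mem_filter, Finset.mem_product]
      constructor
      · rintro ⟨⟨⟨h1, h2⟩, h3⟩, h4⟩
        exact ⟨⟨h1, h4⟩, h2, by rw [← h3]; exact h4⟩
      · rintro ⟨⟨h1, h4⟩, h2, h5⟩
        exact ⟨⟨⟨h1, h2⟩, by rw [h4, h5]⟩, h4⟩
    rw [hfib, Finset.card_product, sq]
  have hCS : ((S.card : ℝ)) ^ 2 ≤ (I.card : ℝ) * (P.card : ℝ) := by
    have h := sq_sum_le_card_mul_sum_sq (s := I)
      (f := fun c => ((S.filter (fun s : ℕ => (↑s : ZMod p) = c)).card : ℝ))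
    have e1 : (S.card : ℝ) = ∑ c ∈ I, ((S.filter (fun s : ℕ => (↑s : ZMod p) = c)).card : ℝ) := by
      rw [hcard]; push_cast; rfl
    have e2 : (P.card : ℝ) = ∑ c ∈ I, (((S.filter (fun s : ℕ => (↑s : ZMod p) = c)).card : ℝ)) ^ 2 := by
      rw [hPcard]; push_cast; rfl
    rw [e1, e2]; exact h
  have hsplit : (P.card : ℝ) ≤ (S.card : ℝ) +
      ((((S ×ˢ S).filter (fun st => st.1 ≠ st.2)).filter
        (fun st => (st.1 : ZMod p) = (st.2 : ZMod p))).card : ℝ) := by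
    have hsub : P.filter (fun st => st.1 = st.2) ⊆ S.diag := by
      intro st hst
      simp only [hP, Finset.mem_filter, Finset.mem_product, Finset.mem_diag] at *
      tauto
    have h2 : (P.filter fun st => st.1 = st.2).card ≤ S.card := by
      simpa [Finset.diag_card] using Finset.card_le_card hsub
    have h3 : P.filter (fun st => ¬ st.1 = st.2)
        = ((S ×ˢ S).filter (fun st => st.1 ≠ st.2)).filter
            (fun st => (st.1 : ZMod p) = (st.2 : ZMod p)) := by
      ext st
      simp only [hP, Finset.mem_filter, ne_eq]
      tauto
    have h4 := Finset.card_filter_add_card_filter_not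
      (s := P) (p := fun st => st.1 = st.2)
    rw [h3] at h4
    have := h4 ▸ (Nat.add_le_add_right h2 _)
    exact_mod_cast this
  have hP0 : (0 : ℝ) ≤ (P.card : ℝ) := by positivity
  calc ((S.card : ℝ)) ^ 2 ≤ (I.card : ℝ) * (P.card : ℝ) := hCS
    _ ≤ (α * p) * (P.card : ℝ) := mul_le_mul_of_nonneg_right hres hP0
    _ ≤ α * p * ((S.card : ℝ) +
        ((((S ×ˢ S).filter (fun st => st.1 ≠ st.2)).filter
          (fun st => (st.1 : ZMod p) = (st.2 : ZMod p))).card : ℝ)) :=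
        mul_le_mul_of_nonneg_left hsplit hαp

/-- The inner divisor-sum bound: sum of `log p` over primes dividing `m ≠ 0` is `≤ log m`. -/
lemma sum_log_primeFactors_le (m : ℕ) (hm : m ≠ 0) :
    ∑ p ∈ m.primeFactors, Real.log p ≤ Real.log m := by
  have hprod : (∏ p ∈ m.primeFactors, p) ∣ m := Nat.prod_primeFactors_dvd m
  have hple : (∏ p ∈ m.primeFactors, p) ≤ m := Nat.le_of_dvd (Nat.pos_of_ne_zero hm) hprod
  have hpos : 0 < ∏ p ∈ m.primeFactors, p :=
    Finset.prod_pos fun p hp => (Nat.prime_of_mem_primeFactors hp).pos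
  calc ∑ p ∈ m.primeFactors, Real.log p
      = Real.log ((∏ p ∈ m.primeFactors, p : ℕ) : ℝ) := by
        rw [Nat.cast_prod, Real.log_prod]
        intro p hp
        have := (Nat.prime_of_mem_primeFactors hp).pos
        positivity
    _ ≤ Real.log m := Real.log_le_log (by exact_mod_cast hpos) (by exact_mod_cast hple)

end GallagherAux

open GallagherAux in
/-- Gallagher's larger sieve bound.  If `S ⊆ {0,…,N}` occupies at most
`α·p` residue classes mod `p` for every prime `p`, then `|S| ≤ C(α)·N^α`. -/
theorem gallagher_larger_sieve_bound (α : ℝ) (hα : 0 < α) :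
    ∃ C : ℝ, 0 < C ∧
      ∀ (N : ℕ), 1 ≤ N → ∀ S : Finset ℕ, (∀ s ∈ S, s ≤ N) →
        (∀ p : ℕ, p.Prime → ((S.image (fun s : ℕ => (s : ZMod p))).card : ℝ) ≤ α * p) →
        (S.card : ℝ) ≤ C * (N : ℝ) ^ α := by
  classical
  refine ⟨Real.exp (3 + α * Real.log 4), Real.exp_pos _, ?_⟩
  intro N hN S hSN hres
  have hN0 : (0 : ℝ) < (N : ℝ) := by exact_mod_cast hN
  have hN1 : (1 : ℝ) ≤ (N : ℝ) := by exact_mod_cast hN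
  have hNpow : (N : ℝ) ^ α = Real.exp (α * Real.log N) := by
    rw [Real.rpow_def_of_pos hN0, mul_comm]
  by_cases hT0 : S.card = 0
  · rw [hT0]
    push_cast
    positivity
  have hT1 : 1 ≤ S.card := Nat.one_le_iff_ne_zero.mpr hT0
  set T := S.card with hTdef
  have hTR : (0 : ℝ) < (T : ℝ) := by exact_mod_cast hT1
  set O := (S ×ˢ S).filter (fun st => st.1 ≠ st.2) with hO
  set Poff : ℕ → Finset (ℕ × ℕ) :=
    fun p => O.filter (fun st => (st.1 : ZMod p) = (st.2 : ZMod p)) with hPoff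
  set PB := Nat.primesBelow (T + 1) with hPB
  -- per-prime inequality
  have key : ∀ p ∈ PB, (T : ℝ) ^ 2 / α * (Real.log p / p)
      ≤ ((T : ℝ) + ((Poff p).card : ℝ)) * Real.log p := by
    intro p hp
    have hpp := Nat.prime_of_mem_primesBelow hp
    have hp1 : (1 : ℝ) < (p : ℝ) := by exact_mod_cast hpp.one_lt
    have hp0 : (0 : ℝ) < (p : ℝ) := lt_trans one_pos hp1
    have hαp : (0 : ℝ) < α * p := by positivity
    have h1 := pair_bound α S p (hres p hpp) hαp.le
    have h2 : (T : ℝ) ^ 2 / (α * p) ≤ (T : ℝ) + ((Poff p).card : ℝ) := by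
      rw [div_le_iff₀ hαp]
      calc (T : ℝ) ^ 2 ≤ α * p * ((T : ℝ) + ((Poff p).card : ℝ)) := h1
        _ = ((T : ℝ) + ((Poff p).card : ℝ)) * (α * p) := by ring
    have h3 := mul_le_mul_of_nonneg_right h2 (Real.log_nonneg hp1.le)
    calc (T : ℝ) ^ 2 / α * (Real.log p / p)
        = (T : ℝ) ^ 2 / (α * p) * Real.log p := by
          field_simp
      _ ≤ ((T : ℝ) + ((Poff p).card : ℝ)) * Real.log p := h3
  have hsum := Finset.sum_le_sum key
  rw [← Finset.mul_sum] at hsum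
  have hRHS : ∑ p ∈ PB, ((T : ℝ) + ((Poff p).card : ℝ)) * Real.log p
      = (T : ℝ) * (∑ p ∈ PB, Real.log p)
        + ∑ p ∈ PB, ((Poff p).card : ℝ) * Real.log p := by
    simp_rw [add_mul]
    rw [Finset.sum_add_distrib, Finset.mul_sum]
  -- the cross-term bound
  have hcross : ∑ p ∈ PB, ((Poff p).card : ℝ) * Real.log p ≤ (T : ℝ) ^ 2 * Real.log N := by
    have hrw : ∀ p ∈ PB, ((Poff p).card : ℝ) * Real.log p
        = ∑ st ∈ O, (if (st.1 : ZMod p) = (st.2 : ZMod p) then Real.log p else 0) := by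
      intro p _
      rw [Finset.sum_ite, Finset.sum_const_zero, add_zero, Finset.sum_const, nsmul_eq_mul]
    have hinner : ∀ st ∈ O,
        ∑ p ∈ PB, (if (st.1 : ZMod p) = (st.2 : ZMod p) then Real.log p else 0)
          ≤ Real.log N := by
      intro st hst
      obtain ⟨hmem, hne⟩ := Finset.mem_filter.mp hst
      obtain ⟨h1S, h2S⟩ := Finset.mem_product.mp hmem
      have hstN1 : st.1 ≤ N := hSN _ h1S
      have hstN2 : st.2 ≤ N := hSN _ h2S
      set m := ((st.1 : ℤ) - (st.2 : ℤ)).natAbs with hm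
      have hm0 : m ≠ 0 := by
        simp only [hm, Int.natAbs_ne_zero, sub_ne_zero]
        exact_mod_cast hne
      have hmN : m ≤ N := by omega
      rw [Finset.sum_ite, Finset.sum_const_zero, add_zero]
      have hsub : PB.filter (fun p => (st.1 : ZMod p) = (st.2 : ZMod p)) ⊆ m.primeFactors := by
        intro p hp
        obtain ⟨hpPB, hcond⟩ := Finset.mem_filter.mp hp
        have hpp := Nat.prime_of_mem_primesBelow hpPB
        have hmod : st.1 ≡ st.2 [MOD p] := (ZMod.natCast_eq_natCast_iff _ _ _).mp hcond
        have hdvd1 : (p : ℤ) ∣ (st.2 : ℤ) - (st.1 : ℤ) := hmod.dvd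
        have hdvd2 : (p : ℤ) ∣ (st.1 : ℤ) - (st.2 : ℤ) := (dvd_sub_comm).mp hdvd1
        have hdvd : p ∣ m := by
          rw [hm]
          exact Int.natCast_dvd_natCast.mp (Int.dvd_natAbs.mpr hdvd2)
        exact Nat.mem_primeFactors.mpr ⟨hpp, hdvd, hm0⟩
      calc ∑ p ∈ PB.filter (fun p => (st.1 : ZMod p) = (st.2 : ZMod p)), Real.log p
          ≤ ∑ p ∈ m.primeFactors, Real.log p := by
            refine Finset.sum_le_sum_of_subset_of_nonneg hsub fun p hp _ => ?_
            have := (Nat.prime_of_mem_primeFactors hp).one_lt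
            exact Real.log_nonneg (by exact_mod_cast this.le)
        _ ≤ Real.log m := sum_log_primeFactors_le m hm0
        _ ≤ Real.log N := Real.log_le_log (by exact_mod_cast Nat.pos_of_ne_zero hm0)
            (by exact_mod_cast hmN)
    calc ∑ p ∈ PB, ((Poff p).card : ℝ) * Real.log p
        = ∑ p ∈ PB, ∑ st ∈ O, (if (st.1 : ZMod p) = (st.2 : ZMod p) then Real.log p else 0) :=
          Finset.sum_congr rfl hrw
      _ = ∑ st ∈ O, ∑ p ∈ PB, (if (st.1 : ZMod p) = (st.2 : ZMod p) then Real.log p else 0) :=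
          Finset.sum_comm
      _ ≤ ∑ st ∈ O, Real.log N := Finset.sum_le_sum hinner
      _ = (O.card : ℝ) * Real.log N := by rw [Finset.sum_const, nsmul_eq_mul]
      _ ≤ (T : ℝ) ^ 2 * Real.log N := by
          have hOcard : O.card ≤ T ^ 2 := by
            calc O.card ≤ (S ×ˢ S).card := Finset.card_filter_le _ _
              _ = T ^ 2 := by rw [Finset.card_product, sq]
          exact mul_le_mul_of_nonneg_right (by exact_mod_cast hOcard) (Real.log_nonneg hN1)
  -- Chebyshev and Mertens
  have htheta : ∑ p ∈ PB, Real.log p ≤ (T : ℝ) * Real.log 4 := theta_le T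
  have hmert : Real.log T - 3 ≤ ∑ p ∈ PB, Real.log p / p := mertens T hT1
  -- assemble
  have hmain : (T : ℝ) ^ 2 / α * (Real.log T - 3)
      ≤ (T : ℝ) ^ 2 * (Real.log 4 + Real.log N) := by
    calc (T : ℝ) ^ 2 / α * (Real.log T - 3)
        ≤ (T : ℝ) ^ 2 / α * (∑ p ∈ PB, Real.log p / p) :=
          mul_le_mul_of_nonneg_left hmert (by positivity)
      _ ≤ ∑ p ∈ PB, ((T : ℝ) + ((Poff p).card : ℝ)) * Real.log p := hsum
      _ = (T : ℝ) * (∑ p ∈ PB, Real.log p)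
          + ∑ p ∈ PB, ((Poff p).card : ℝ) * Real.log p := hRHS
      _ ≤ (T : ℝ) * ((T : ℝ) * Real.log 4) + (T : ℝ) ^ 2 * Real.log N := by
          have := mul_le_mul_of_nonneg_left htheta hTR.le
          linarith
      _ = (T : ℝ) ^ 2 * (Real.log 4 + Real.log N) := by ring
  have hT2 : (0 : ℝ) < (T : ℝ) ^ 2 := by positivity
  have hdiv : (Real.log T - 3) / α ≤ Real.log 4 + Real.log N := by
    have h1 : (T : ℝ) ^ 2 * ((Real.log T - 3) / α)
        ≤ (T : ℝ) ^ 2 * (Real.log 4 + Real.log N) := by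
      calc (T : ℝ) ^ 2 * ((Real.log T - 3) / α)
          = (T : ℝ) ^ 2 / α * (Real.log T - 3) := by ring
        _ ≤ (T : ℝ) ^ 2 * (Real.log 4 + Real.log N) := hmain
    exact (mul_le_mul_iff_right₀ hT2).mp h1
  have hlogT : Real.log T ≤ (3 + α * Real.log 4) + α * Real.log N := by
    rw [div_le_iff₀ hα] at hdiv
    nlinarith
  calc (T : ℝ) = Real.exp (Real.log T) := (Real.exp_log hTR).symm
    _ ≤ Real.exp ((3 + α * Real.log 4) + α * Real.log N) := Real.exp_le_exp.mpr hlogT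
    _ = Real.exp (3 + α * Real.log 4) * (N : ℝ) ^ α := by
        rw [Real.exp_add, hNpow]
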